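/- arXiv:quant-ph/0610195 — 3 statements merged into one kernel-verified Lean document; each statement's English description precedes it below -/
import Mathlib

section
/- Let F be a finite field and n a positive integer. Suppose C1 and C2 are linear subspaces of F^n with C2^⊥ ≤ C1, and suppose C1 = C2^⊥ + span{g1_1,…,g1_k} where the g1_i together with a basis of C2^⊥ form a basis of C1 (so k = dim C1 + dim C2 − n). Then there exist vectors g2_1,…,g2_k ∈ F^n such that C2 = C1^⊥ + span{g2_1,…,g2_k} and ⟨g1_i, g2_j⟩ = δ_{ij} for all i,j, where ⟨·,·⟩ is the standard dot product. -/
open Module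

def dualCode {F : Type*} [Field F] {ι : Type*} [Fintype ι]
    (C : Submodule F (ι → F)) : Submodule F (ι → F) where
  carrier := {y | ∀ x ∈ C, dotProduct x y = 0}
  add_mem' := by
    intro a b ha hb x hx
    simp [dotProduct_add, ha x hx, hb x hx]
  zero_mem' := by intro x hx; simp
  smul_mem' := by
    intro c a ha x hx
    simp [dotProduct_smul, ha x hx]

section aux
variable {F : Type*} [Field F] {m : ℕ}

/-- The dot-product bilinear form. -/
noncomputable def dotForm : LinearMap.BilinForm F (Fin m → F) :=
  LinearMap.mk₂ F dotProduct
    (fun x y z => add_dotProduct x y z)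
    (fun c x y => smul_dotProduct c x y)
    (fun x y z => dotProduct_add x y z)
    (fun c x y => dotProduct_smul c x y)

lemma dotForm_apply (x y : Fin m → F) : dotForm x y = dotProduct x y := rfl

lemma dotForm_isRefl : (dotForm (F := F) (m := m)).IsRefl := by
  intro x y h
  rw [dotForm_apply, dotProduct_comm] at h
  exact h

lemma dotForm_nondegenerate : (dotForm (F := F) (m := m)).Nondegenerate := by
  refine LinearMap.BilinForm.Nondegenerate.ofSeparatingLeft ?_
  intro x hx
  funext i
  have := hx (Pi.single i 1)
  rwa [dotForm_apply, dotProduct_single, mul_one] at this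

lemma dualCode_eq_orthogonal (C : Submodule F (Fin m → F)) :
    dualCode C = dotForm.orthogonal C := by
  ext y
  constructor
  · intro hy x hx
    exact hy x hx
  · intro hy x hx
    exact hy x hx

lemma mem_dualCode {C : Submodule F (Fin m → F)} {y : Fin m → F} :
    y ∈ dualCode C ↔ ∀ x ∈ C, dotProduct x y = 0 := Iff.rfl

lemma finrank_dualCode (C : Submodule F (Fin m → F)) :
    finrank F (dualCode C) = m - finrank F C := by
  rw [dualCode_eq_orthogonal,
    LinearMap.BilinForm.finrank_orthogonal dotForm_nondegenerate]
  simp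

lemma finrank_add_finrank_dualCode (C : Submodule F (Fin m → F)) :
    finrank F C + finrank F (dualCode C) = m := by
  rw [finrank_dualCode]
  have : finrank F C ≤ m := by
    simpa using Submodule.finrank_le C
  omega

lemma dualCode_dualCode (C : Submodule F (Fin m → F)) :
    dualCode (dualCode C) = C := by
  rw [dualCode_eq_orthogonal, dualCode_eq_orthogonal]
  exact LinearMap.BilinForm.orthogonal_orthogonal dotForm_nondegenerate dotForm_isRefl C

lemma dualCode_antitone {C D : Submodule F (Fin m → F)} (h : C ≤ D) :
    dualCode D ≤ dualCode C := fun y hy x hx => hy x (h hx)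

lemma dualCode_sup (C D : Submodule F (Fin m → F)) :
    dualCode (C ⊔ D) = dualCode C ⊓ dualCode D := by
  refine le_antisymm (le_inf (dualCode_antitone le_sup_left)
    (dualCode_antitone le_sup_right)) ?_
  rintro y ⟨hy1, hy2⟩ x hx
  obtain ⟨a, ha, b, hb, rfl⟩ := Submodule.mem_sup.mp hx
  rw [add_dotProduct, hy1 a ha, hy2 b hb, add_zero]

end aux

/-- existence of dual generator vectors for a CSS code pair. -/
theorem stmt0 {F : Type*} [Field F] [Fintype F] {n k : ℕ} (hn : 0 < n)
    (C1 C2 : Submodule F (Fin n → F))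
    (hCSS : dualCode C2 ≤ C1)
    (g1 : Fin k → Fin n → F)
    (hspan : C1 = dualCode C2 ⊔ Submodule.span F (Set.range g1))
    (hli : LinearIndependent F g1)
    (hdisj : Submodule.span F (Set.range g1) ⊓ dualCode C2 = ⊥)
    (hk : Module.finrank F C1 + Module.finrank F C2 = n + k) :
    ∃ g2 : Fin k → Fin n → F,
      C2 = dualCode C1 ⊔ Submodule.span F (Set.range g2) ∧
      ∀ i j, dotProduct (g1 i) (g2 j) = if i = j then 1 else 0 := by
  classical
  -- the pairing map L y = fun i => ⟨g1 i, y⟩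
  set L : (Fin n → F) →ₗ[F] (Fin k → F) :=
    { toFun := fun y i => dotProduct (g1 i) y
      map_add' := by intro a b; funext i; simp [dotProduct_add]
      map_smul' := by intro c a; funext i; simp [dotProduct_smul] } with hL
  have hLapp : ∀ y i, L y i = dotProduct (g1 i) y := fun _ _ => rfl
  have hg1mem : ∀ i, g1 i ∈ C1 := by
    intro i
    rw [hspan]
    exact Submodule.mem_sup_right (Submodule.subset_span ⟨i, rfl⟩)
  -- kernel of L is the dual of span g1
  have hker : LinearMap.ker L = dualCode (Submodule.span F (Set.range g1)) := by
    ext y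
    constructor
    · intro hy x hx
      induction hx using Submodule.span_induction with
      | mem x hx =>
        obtain ⟨i, rfl⟩ := hx
        exact congrFun hy i
      | zero => simp
      | add a b _ _ ha hb => rw [add_dotProduct, ha, hb, add_zero]
      | smul c a _ ha => rw [smul_dotProduct, ha, smul_zero]
    · intro hy
      funext i
      exact hy (g1 i) (Submodule.subset_span ⟨i, rfl⟩)
  -- C2 ∩ ker L = dualCode C1
  have hC2eq : dualCode (dualCode C2) = C2 := dualCode_dualCode C2
  have hinter : C2 ⊓ LinearMap.ker L = dualCode C1 := by
    rw [hker, ← hC2eq, ← dualCode_sup, ← hspan]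
  have hdualC1 : finrank F (dualCode C1) + finrank F C1 = n := by
    have := finrank_add_finrank_dualCode C1; omega
  have hfC2 : finrank F C2 ≤ n := by simpa using Submodule.finrank_le C2
  have hfC1 : finrank F C1 ≤ n := by simpa using Submodule.finrank_le C1
  -- surjectivity of L restricted to C2
  have hmap : Submodule.map L C2 = ⊤ := by
    apply Submodule.eq_top_of_finrank_eq
    have h1 : Submodule.map L C2 = LinearMap.range (L.comp C2.subtype) := by
      rw [LinearMap.range_comp, Submodule.range_subtype]
    have h2 := LinearMap.finrank_range_add_finrank_ker (L.comp C2.subtype)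
    rw [LinearMap.ker_comp] at h2
    have h3 : Submodule.comap C2.subtype (LinearMap.ker L)
        = Submodule.comap C2.subtype (C2 ⊓ LinearMap.ker L) := by
      rw [Submodule.comap_inf, Submodule.comap_subtype_self, top_inf_eq]
    have h4 : finrank F (Submodule.comap C2.subtype (C2 ⊓ LinearMap.ker L))
        = finrank F (C2 ⊓ LinearMap.ker L : Submodule F (Fin n → F)) :=
      (Submodule.comapSubtypeEquivOfLe inf_le_left).finrank_eq
    rw [h3, h4, hinter] at h2
    have h5 : finrank F (Fin k → F) = k := by simp
    rw [h1, h5]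
    omega
  -- choose g2
  have hexists : ∀ j : Fin k, ∃ v, v ∈ C2 ∧ L v = Pi.single j 1 := by
    intro j
    have : (Pi.single j 1 : Fin k → F) ∈ Submodule.map L C2 := by
      rw [hmap]; trivial
    obtain ⟨v, hv, hv'⟩ := this
    exact ⟨v, hv, hv'⟩
  choose g2 hg2mem hg2dot using hexists
  have hdot : ∀ i j, dotProduct (g1 i) (g2 j) = if i = j then 1 else 0 := by
    intro i j
    have := congrFun (hg2dot j) i
    rw [hLapp] at this
    rw [this, Pi.single_apply]
  refine ⟨g2, ?_, hdot⟩
  -- C1^⊥ ≤ C2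
  have hle1 : dualCode C1 ≤ C2 := by
    rw [← hC2eq]
    exact dualCode_antitone hCSS
  have hle : dualCode C1 ⊔ Submodule.span F (Set.range g2) ≤ C2 := by
    refine sup_le hle1 ?_
    rw [Submodule.span_le]
    rintro _ ⟨j, rfl⟩
    exact hg2mem j
  -- spans intersect trivially
  have hdisj2 : dualCode C1 ⊓ Submodule.span F (Set.range g2) = ⊥ := by
    rw [eq_bot_iff]
    rintro v ⟨hv1, hv2⟩
    obtain ⟨c, rfl⟩ := (Submodule.mem_span_range_iff_exists_fun F).mp hv2
    have hc : ∀ i, c i = 0 := by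
      intro i
      have h0 : dotProduct (g1 i) (∑ j, c j • g2 j) = 0 :=
        hv1 (g1 i) (hg1mem i)
      have : L (∑ j, c j • g2 j) i = 0 := h0
      rw [map_sum] at this
      simp only [map_smul] at this
      simp only [Finset.sum_apply, Pi.smul_apply, hg2dot, Pi.single_apply,
        smul_eq_mul, mul_ite, mul_one, mul_zero] at this
      simpa using this
    have : ∀ j, c j • g2 j = 0 := by intro j; rw [hc j, zero_smul]
    simp [this]
  -- linear independence of g2
  have hlig2 : LinearIndependent F g2 := by
    have : LinearIndependent F (L ∘ g2) := by
      have heq : L ∘ g2 = ⇑(Pi.basisFun F (Fin k)) := by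
        funext j; rw [Pi.basisFun_apply]; exact hg2dot j
      rw [heq]
      exact (Pi.basisFun F (Fin k)).linearIndependent
    exact this.of_comp L
  have hfspan : finrank F (Submodule.span F (Set.range g2)) = k := by
    rw [finrank_span_eq_card hlig2]
    simp
  -- conclude by dimension count
  apply (Submodule.eq_of_le_of_finrank_le hle ?_).symm
  have hsum := Submodule.finrank_sup_add_finrank_inf_eq (dualCode C1)
    (Submodule.span F (Set.range g2))
  rw [hdisj2, finrank_bot, add_zero, hfspan] at hsum
  omega
end

section
/- Steane enlargement (generator matrix form): let U be a generator matrix of a linear code C ≤ F_q^{N} with C^⊥ ≤ C, enlarged to C' with full-rank generator matrix W = [U; V], dim C' ≥ dim C + 2, and let M be an invertible square matrix of size dim C' − dim C over F_q with no eigenvalue in F_q. Then the matrix G = [[U,0],[0,U],[V,MV]] generates a symplectic code: the F_q-span of the rows of G contains its dual with respect to the symplectic form f_s((u_x|u_z),(v_x|v_z)) = ⟨u_x,v_z⟩ − ⟨u_z,v_x⟩ on F_q^{2N}. -/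
/-- The dual of a subspace of `F^n × F^n` with respect to the standard
symplectic form `f_s((u_x|u_z),(v_x|v_z)) = ⟨u_x,v_z⟩ - ⟨u_z,v_x⟩`. -/
def sympDual {F : Type*} [Field F] {n : ℕ}
    (S : Submodule F ((Fin n → F) × (Fin n → F))) :
    Submodule F ((Fin n → F) × (Fin n → F)) where
  carrier := {y | ∀ x ∈ S,
    dotProduct x.1 y.2 - dotProduct x.2 y.1 = 0}
  add_mem' := by
    intro a b ha hb x hx
    have h1 := ha x hx
    have h2 := hb x hx
    simp only [Prod.fst_add, Prod.snd_add, dotProduct_add] at *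
    linear_combination h1 + h2
  zero_mem' := by intro x hx; simp
  smul_mem' := by
    intro c a ha x hx
    have h := ha x hx
    simp only [Prod.smul_fst, Prod.smul_snd, dotProduct_smul,
      smul_eq_mul] at *
    linear_combination c * h

/-- Steane's enlargement construction yields a symplectic
(dual-containing) code. -/
theorem stmt15 {F : Type*} [Field F] [Fintype F] {N r s : ℕ} (hs : 2 ≤ s)
    (U : Fin r → Fin N → F) (V : Fin s → Fin N → F)
    (hW : LinearIndependent F (Sum.elim U V))
    (C : Submodule F (Fin N → F)) (hC : C = Submodule.span F (Set.range U))
    (hCdual : dualCode C ≤ C)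
    (M : Matrix (Fin s) (Fin s) F) (hMunit : IsUnit M.det)
    (hMev : ∀ (x : Fin s → F) (lam : F), x ≠ 0 → Matrix.vecMul x M ≠ lam • x)
    (S : Submodule F ((Fin N → F) × (Fin N → F)))
    (hS : S = Submodule.span F
      ((Set.range fun i => (U i, (0 : Fin N → F))) ∪
       (Set.range fun i => ((0 : Fin N → F), U i)) ∪
       (Set.range fun j => (V j, fun t => ∑ l, M j l * V l t)))) :
    sympDual S ≤ S := by
  subst hS
  intro y hy
  -- first components of generators
  have h1 : ∀ i, dotProduct (U i) y.1 = 0 := by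
    intro i
    have := hy ((0 : Fin N → F), U i)
      (Submodule.subset_span (Or.inl (Or.inr ⟨i, rfl⟩)))
    simpa using this
  have h2 : ∀ i, dotProduct (U i) y.2 = 0 := by
    intro i
    have := hy ((U i, (0 : Fin N → F)))
      (Submodule.subset_span (Or.inl (Or.inl ⟨i, rfl⟩)))
    simpa using this
  have key : ∀ z : Fin N → F, (∀ i, dotProduct (U i) z = 0) →
      z ∈ C := by
    intro z hz
    apply hCdual
    intro x hx
    rw [hC] at hx
    induction hx using Submodule.span_induction with
    | mem x hx => obtain ⟨i, rfl⟩ := hx; exact hz i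
    | zero => simp
    | add a b _ _ ha hb => simp [add_dotProduct, ha, hb]
    | smul c a _ ha => simp [smul_dotProduct, ha]
  have hy1 : y.1 ∈ C := key y.1 h1
  have hy2 : y.2 ∈ C := key y.2 h2
  have hmap1 : (y.1, (0 : Fin N → F)) ∈ Submodule.span F
      ((Set.range fun i => (U i, (0 : Fin N → F))) ∪
       (Set.range fun i => ((0 : Fin N → F), U i)) ∪
       (Set.range fun j => (V j, fun t => ∑ l, M j l * V l t))) := by
    have : (y.1, (0 : Fin N → F)) ∈
        Submodule.map (LinearMap.inl F (Fin N → F) (Fin N → F)) C := ⟨y.1, hy1, rfl⟩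
    rw [hC, Submodule.map_span] at this
    refine Submodule.span_mono ?_ this
    rintro _ ⟨_, ⟨i, rfl⟩, rfl⟩
    exact Or.inl (Or.inl ⟨i, rfl⟩)
  have hmap2 : ((0 : Fin N → F), y.2) ∈ Submodule.span F
      ((Set.range fun i => (U i, (0 : Fin N → F))) ∪
       (Set.range fun i => ((0 : Fin N → F), U i)) ∪
       (Set.range fun j => (V j, fun t => ∑ l, M j l * V l t))) := by
    have : ((0 : Fin N → F), y.2) ∈
        Submodule.map (LinearMap.inr F (Fin N → F) (Fin N → F)) C := ⟨y.2, hy2, rfl⟩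
    rw [hC, Submodule.map_span] at this
    refine Submodule.span_mono ?_ this
    rintro _ ⟨_, ⟨i, rfl⟩, rfl⟩
    exact Or.inl (Or.inr ⟨i, rfl⟩)
  have : y = (y.1, (0 : Fin N → F)) + ((0 : Fin N → F), y.2) := by
    ext <;> simp
  rw [this]
  exact Submodule.add_mem _ hmap1 hmap2
end

section
/- For every even prime power q that is a square (q = 2^{2m}, m ≥ 1) and every integer n ≥ 3, there exists an [n, n−1] linear code C1 over F_q such that: (A') C1^⊥ = span{b} for some vector b all of whose coordinates are nonzero and with ⟨b,b⟩ = 0 (b is self-orthogonal); and (B') there exist vectors g_1,…,g_{n−2} ∈ C1 with ⟨g_i, g_j⟩ = δ_{ij} which together with b form a basis of C1. In particular (C1, C1) is an [[n, n−2, 2]] code pair. -/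
open Matrix

lemma mem_dualCode_span_singleton {F : Type*} [Field F] {ι : Type*} [Fintype ι]
    (b y : ι → F) : y ∈ dualCode (Submodule.span F {b}) ↔ dotProduct b y = 0 := by
  constructor
  · intro h; exact h b (Submodule.mem_span_singleton_self b)
  · intro h x hx
    obtain ⟨c, rfl⟩ := Submodule.mem_span_singleton.mp hx
    rw [smul_dotProduct, h, smul_zero]

lemma finrank_dualCode_span_singleton {F : Type*} [Field F] [Fintype F] {n : ℕ}
    (b : Fin n → F) (hb : ∃ k, b k ≠ 0) :
    Module.finrank F (dualCode (Submodule.span F {b})) = n - 1 := by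
  classical
  obtain ⟨k, hk⟩ := hb
  let φ : (Fin n → F) →ₗ[F] F :=
    { toFun := fun y => dotProduct b y
      map_add' := fun x y => dotProduct_add b x y
      map_smul' := fun c y => by simp [dotProduct_smul] }
  have hker : LinearMap.ker φ = dualCode (Submodule.span F {b}) := by
    ext y
    rw [LinearMap.mem_ker, mem_dualCode_span_singleton]
    rfl
  have hsurj : Function.Surjective φ := by
    intro c
    refine ⟨c • (Pi.single k ((b k)⁻¹) : Fin n → F), ?_⟩
    show dotProduct b (c • (Pi.single k ((b k)⁻¹) : Fin n → F)) = c
    rw [dotProduct_smul, dotProduct_single]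
    field_simp
    rw [smul_eq_mul, mul_one]
  have hrange : LinearMap.range φ = ⊤ := LinearMap.range_eq_top.mpr hsurj
  have h := LinearMap.finrank_range_add_finrank_ker φ
  rw [hrange, hker] at h
  have h1 : Module.finrank F (⊤ : Submodule F F) = 1 := by
    rw [finrank_top, Module.finrank_self]
  have h2 : Module.finrank F (Fin n → F) = n := by
    simp [Module.finrank_pi]
  rw [h1, h2] at h
  omega

lemma sum_dotProduct' {F : Type*} [Field F] {m k : ℕ} (v : Fin m → Fin k → F)
    (w : Fin k → F) :
    dotProduct (∑ i, v i) w = ∑ i, dotProduct (v i) w := by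
  simp only [dotProduct, Finset.sum_apply, Finset.sum_mul]
  exact Finset.sum_comm

theorem main {F : Type*} [Field F] [Fintype F] [CharP F 2]
    {n : ℕ} (hn : 3 ≤ n)
    (ζ : F) (hz0 : ζ ≠ 0) (hz1 : ζ ≠ 1) (hzeq : ζ ^ 2 + ζ + 1 = 0) (htwo : (2:F) = 0) :
    ∃ (b : Fin n → F) (g : Fin (n - 2) → Fin n → F),
      (∀ i, b i ≠ 0) ∧
      dotProduct b b = 0 ∧
      (∀ i, dotProduct b (g i) = 0) ∧
      (∀ i j, dotProduct (g i) (g j) = if i = j then 1 else 0) ∧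
      dualCode (Submodule.span F {b}) =
        Submodule.span F {b} ⊔ Submodule.span F (Set.range g) ∧
      Module.finrank F (dualCode (Submodule.span F {b})) = n - 1 := by
  classical
  have hself : ∀ x : F, x + x = 0 := fun x => by
    have h : x + x = 2 * x := by ring
    rw [h, htwo, zero_mul]
  have hzsum : ζ + ζ ^ 2 = 1 := by linear_combination hzeq - htwo
  -- T
  set T : F := ζ + ((n - 3 : ℕ) : F) with hT
  have hT0 : T ≠ 0 := by
    rcases Nat.even_or_odd (n - 3) with ⟨k, hk⟩ | ⟨k, hk⟩
    · have : ((n - 3 : ℕ) : F) = 0 := by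
        rw [hk]; push_cast; rw [← two_mul, htwo, zero_mul]
      rw [hT, this, add_zero]; exact hz0
    · have : ((n - 3 : ℕ) : F) = 1 := by
        rw [hk]; push_cast; rw [htwo, zero_mul, zero_add]
      rw [hT, this]
      intro h
      apply hz1
      linear_combination h - htwo
  -- indices
  set z : Fin n := ⟨0, by omega⟩ with hzdef
  set p : Fin n := ⟨n - 2, by omega⟩ with hpdef
  set q : Fin n := ⟨n - 1, by omega⟩ with hqdef
  have hzp : z ≠ p := by simp [hzdef, hpdef, Fin.ext_iff]; omega
  have hzq : z ≠ q := by simp [hzdef, hqdef, Fin.ext_iff]; omega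
  have hpq : p ≠ q := by simp [hpdef, hqdef, Fin.ext_iff]; omega
  set emb : Fin (n - 2) → Fin n := fun i => ⟨i.1, by omega⟩ with hemb
  have hembinj : Function.Injective emb := by
    intro i j h; simpa [hemb, Fin.ext_iff] using h
  have hembp : ∀ i, emb i ≠ p := by
    intro i h; have := i.2; simp [hemb, hpdef, Fin.ext_iff] at h; omega
  have hembq : ∀ i, emb i ≠ q := by
    intro i h; have := i.2; simp [hemb, hqdef, Fin.ext_iff] at h; omega
  -- vectors
  obtain ⟨b, hb⟩ : ∃ b : Fin n → F, b = fun k =>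
      if k = p then ζ * T else if k = q then ζ ^ 2 * T else if k = z then ζ else 1 := ⟨_, rfl⟩
  obtain ⟨w, hw⟩ : ∃ w : Fin n → F, w = Pi.single p 1 + Pi.single q 1 := ⟨_, rfl⟩
  obtain ⟨u, hu⟩ : ∃ u : Fin (n - 2) → F, u = fun i => b (emb i) * T⁻¹ := ⟨_, rfl⟩
  obtain ⟨g, hg⟩ : ∃ g : Fin (n - 2) → Fin n → F,
      g = fun i => Pi.single (emb i) (1 : F) + u i • w := ⟨_, rfl⟩
  have hbp : b p = ζ * T := by rw [hb]; simp
  have hbq : b q = ζ ^ 2 * T := by rw [hb]; simp [hpq.symm]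
  have hbz : b z = ζ := by rw [hb]; simp [hzp, hzq]
  have hbne : ∀ k, b k ≠ 0 := by
    intro k
    rw [hb]; dsimp only
    split_ifs
    · exact mul_ne_zero hz0 hT0
    · exact mul_ne_zero (pow_ne_zero 2 hz0) hT0
    · exact hz0
    · exact one_ne_zero
  -- sum of b is 0
  have hbval : ∀ k, b k = 1 + ((if k = z then ζ - 1 else 0) +
      (if k = p then ζ * T - 1 else 0) + (if k = q then ζ ^ 2 * T - 1 else 0)) := by
    intro k
    rw [hb]
    by_cases h1 : k = p
    · subst h1; simp [hzp.symm, hpq]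
    · by_cases h2 : k = q
      · subst h2; simp [hzq.symm, h1]
      · by_cases h3 : k = z
        · subst h3; simp [hzp, hzq]
        · simp [h1, h2, h3]
  have hsum : ∑ k, b k = 0 := by
    have hcast : ((n - 3 : ℕ) : F) = (n : F) - 3 := by
      have : ((n - 3 : ℕ) : F) = ((n : ℕ) : F) - ((3 : ℕ) : F) := Nat.cast_sub (by omega)
      rw [this]; norm_num
    calc ∑ k, b k
        = ∑ k : Fin n, (1 + ((if k = z then ζ - 1 else 0) +
            (if k = p then ζ * T - 1 else 0) + (if k = q then ζ ^ 2 * T - 1 else 0))) := by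
          exact Finset.sum_congr rfl fun k _ => hbval k
      _ = (n : F) + ((ζ - 1) + (ζ * T - 1) + (ζ ^ 2 * T - 1)) := by
          rw [Finset.sum_add_distrib, Finset.sum_add_distrib, Finset.sum_add_distrib]
          simp [Finset.sum_ite_eq', Finset.card_univ]
      _ = 0 := by
          have hTn : T = ζ + ((n : F) - 3) := by rw [hT, hcast]
          linear_combination T * hzsum + hTn + ((n : F) + ζ - 3) * htwo
  -- b self-orthogonal
  haveI : Fact (Nat.Prime 2) := ⟨Nat.prime_two⟩
  have hbb : dotProduct b b = 0 := by
    have h1 : dotProduct b b = ∑ k, b k ^ 2 := by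
      simp [dotProduct, sq]
    have h2 : (∑ k, b k) ^ 2 = ∑ k, b k ^ 2 := sum_pow_char (R := F) (p := 2) Finset.univ b
    rw [h1, ← h2, hsum]
    ring
  -- dot product helpers
  have hwemb : ∀ i, w (emb i) = 0 := by
    intro i
    rw [hw]
    simp [Pi.single_eq_of_ne (hembp i), Pi.single_eq_of_ne (hembq i)]
  have hdotw : ∀ v : Fin n → F, dotProduct v w = v p + v q := by
    intro v
    rw [hw, dotProduct_add, dotProduct_single, dotProduct_single,
      mul_one, mul_one]
  have hwdot : ∀ v : Fin n → F, dotProduct w v = v p + v q := by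
    intro v
    rw [hw, add_dotProduct, single_dotProduct, single_dotProduct,
      one_mul, one_mul]
  have hww : dotProduct w w = 0 := by
    rw [hdotw w, hw]
    simp [Pi.single_eq_of_ne hpq, Pi.single_eq_of_ne hpq.symm]
    exact hself 1
  have hbw : dotProduct b w = T := by
    rw [hdotw b, hbp, hbq]
    linear_combination T * hzsum
  have hbg : ∀ i, dotProduct b (g i) = 0 := by
    intro i
    rw [hg]
    dsimp only
    rw [dotProduct_add, dotProduct_single, dotProduct_smul, hbw, mul_one,
      hu]
    dsimp only
    rw [smul_eq_mul, mul_assoc, inv_mul_cancel₀ hT0, mul_one]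
    exact hself _
  have hgg : ∀ i j, dotProduct (g i) (g j) = if i = j then 1 else 0 := by
    intro i j
    rw [hg]
    dsimp only
    simp only [add_dotProduct, dotProduct_add, smul_dotProduct,
      dotProduct_smul, single_dotProduct, dotProduct_single, hww,
      hwemb i, hwemb j, smul_eq_mul]
    simp only [Pi.add_apply, Pi.smul_apply, smul_eq_mul, hwemb j, Pi.single_apply,
      mul_zero, add_zero, mul_one, zero_add]
    by_cases h : i = j
    · subst h; simp
    · simp [h, hembinj.ne (Ne.symm h)]
  -- linear independence of b together with the g's
  obtain ⟨G, hG⟩ : ∃ G : Fin (n - 2 + 1) → Fin n → F, G = Fin.cons b g := ⟨_, rfl⟩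
  have hGli : LinearIndependent F G := by
    rw [Fintype.linearIndependent_iff]
    intro c hc
    have hsucc : ∀ j : Fin (n - 2), c j.succ = 0 := by
      intro j
      have h0 : dotProduct (∑ i, c i • G i) (g j) = 0 := by
        rw [hc, zero_dotProduct]
      rw [sum_dotProduct'] at h0
      rw [Fin.sum_univ_succ] at h0
      simp only [hG, Fin.cons_zero, Fin.cons_succ, smul_dotProduct, hbg j, hgg,
        smul_eq_mul, mul_zero, mul_ite, mul_one, zero_add] at h0
      rwa [Finset.sum_ite_eq' Finset.univ j (fun i => c i.succ), if_pos (Finset.mem_univ j)]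
        at h0
    have h00 : c 0 • b = 0 := by
      rw [Fin.sum_univ_succ] at hc
      simp only [hG, Fin.cons_zero, Fin.cons_succ] at hc
      have hz : ∑ i : Fin (n - 2), c i.succ • g i = 0 :=
        Finset.sum_eq_zero fun i _ => by rw [hsucc i, zero_smul]
      rwa [hz, add_zero] at hc
    have hc0 : c 0 = 0 := by
      have := congrFun h00 p
      simp only [Pi.smul_apply, smul_eq_mul, Pi.zero_apply] at this
      rcases mul_eq_zero.mp this with h | h
      · exact h
      · exact absurd h (hbne p)
    intro i
    exact Fin.cases hc0 hsucc i
  have hrange : Set.range G = insert b (Set.range g) := by rw [hG]; exact Fin.range_cons b g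
  have hsub : Submodule.span F {b} ⊔ Submodule.span F (Set.range g) ≤
      dualCode (Submodule.span F {b}) := by
    apply sup_le
    · rw [Submodule.span_le, Set.singleton_subset_iff]
      exact (mem_dualCode_span_singleton b b).mpr hbb
    · rw [Submodule.span_le]
      rintro _ ⟨i, rfl⟩
      exact (mem_dualCode_span_singleton b (g i)).mpr (hbg i)
  have hfrdual : Module.finrank F (dualCode (Submodule.span F {b})) = n - 1 :=
    finrank_dualCode_span_singleton b ⟨p, hbne p⟩
  have hfrspan : Module.finrank F
      ((Submodule.span F {b} ⊔ Submodule.span F (Set.range g) : Submodule F (Fin n → F))) =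
      n - 1 := by
    rw [← Submodule.span_insert, ← hrange, finrank_span_eq_card hGli, Fintype.card_fin]
    omega
  have heq : dualCode (Submodule.span F {b}) =
      Submodule.span F {b} ⊔ Submodule.span F (Set.range g) :=
    (Submodule.eq_of_le_of_finrank_le hsub (by rw [hfrdual, hfrspan])).symm
  exact ⟨b, g, hbne, hbb, hbg, hgg, heq, hfrdual⟩


/-- over any field of order `2^{2m}` and for any `n ≥ 3` there
is an `[n, n-1]` code `C1 = (span b)^⊥` with `b` full-weight self-orthogonal,
and orthonormal vectors `g_1, …, g_{n-2}` which together with `b` form a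
basis of `C1`. -/
theorem stmt17 {F : Type*} [Field F] [Fintype F]
    (hq : ∃ m : ℕ, 1 ≤ m ∧ Fintype.card F = 2 ^ (2 * m))
    {n : ℕ} (hn : 3 ≤ n) :
    ∃ (b : Fin n → F) (g : Fin (n - 2) → Fin n → F),
      (∀ i, b i ≠ 0) ∧
      dotProduct b b = 0 ∧
      (∀ i, dotProduct b (g i) = 0) ∧
      (∀ i j, dotProduct (g i) (g j) = if i = j then 1 else 0) ∧
      dualCode (Submodule.span F {b}) =
        Submodule.span F {b} ⊔ Submodule.span F (Set.range g) ∧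
      Module.finrank F (dualCode (Submodule.span F {b})) = n - 1 := by
  obtain ⟨m, hm, hcard⟩ := hq
  have hchar2 : ringChar F = 2 := by
    rw [FiniteField.even_card_iff_char_two, hcard, Nat.pow_mod]
    rw [Nat.zero_pow (by omega : 0 < 2 * m)]
  haveI : CharP F 2 := ringChar.of_eq hchar2
  have htwo : (2 : F) = 0 := by
    have := CharP.cast_eq_zero F 2
    exact_mod_cast this
  classical
  haveI : Fact (Nat.Prime 3) := ⟨by norm_num⟩
  have hdvd : 3 ∣ Fintype.card Fˣ := by
    rw [Fintype.card_units, hcard]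
    have h4 : (2 : ℕ) ^ (2 * m) = 4 ^ m := by rw [pow_mul]; norm_num
    rw [h4]
    have := Nat.sub_dvd_pow_sub_pow 4 1 m
    simpa using this
  obtain ⟨ζu, hord⟩ := exists_prime_orderOf_dvd_card 3 hdvd
  have hz0 : (ζu : F) ≠ 0 := ζu.ne_zero
  have hz1 : (ζu : F) ≠ 1 := by
    intro h
    have : ζu = 1 := Units.ext h
    rw [this] at hord; simp at hord
  have hzeq : (ζu : F) ^ 2 + (ζu : F) + 1 = 0 := by
    have h3 : (ζu : F) ^ 3 = 1 := by
      have h := pow_orderOf_eq_one ζu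
      rw [hord] at h
      calc ((ζu : F)) ^ 3 = ((ζu ^ 3 : Fˣ) : F) := by push_cast; ring
        _ = 1 := by rw [h]; rfl
    have hne : (ζu : F) - 1 ≠ 0 := by
      intro h
      exact hz1 (by linear_combination h)
    have hfac : ((ζu : F) - 1) * ((ζu : F) ^ 2 + (ζu : F) + 1) = 0 := by
      linear_combination h3
    rcases mul_eq_zero.mp hfac with h | h
    · exact absurd h hne
    · exact h
  exact main hn (ζu : F) hz0 hz1 hzeq htwo
end
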